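/- arXiv:1805.01461 — 3 statements merged into one kernel-verified Lean document; each statement's English description precedes it below -/
import Mathlib

section
/- Let A be a bounded right linear operator on a right quaternionic Hilbert space. Then the boundary of the S-spectrum of A is contained in the approximate S-point spectrum of A; in particular the approximate S-point spectrum is a nonempty closed subset of ℍ. -/
notation "ℍ" => Quaternion ℝ

open MulOpposite Filter

variable {V : Type*} [NormedAddCommGroup V] [NormedSpace ℝ V] [Module ℍᵐᵒᵖ V]
  [IsBoundedSMul ℍᵐᵒᵖ V] [SMulCommClass ℍᵐᵒᵖ ℝ V] [IsScalarTower ℝ ℍᵐᵒᵖ V]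
  [CompleteSpace V]

/-- The pseudo-resolvent operator `R_q(A) = A² − 2 Re(q) A + |q|² I`. -/
noncomputable def pseudoRes (A : V →L[ℍᵐᵒᵖ] V) (q : ℍ) : V →L[ℍᵐᵒᵖ] V :=
  A.comp A - (2 * q.re) • A + (‖q‖ ^ 2 : ℝ) • ContinuousLinearMap.id ℍᵐᵒᵖ V

/-- The approximate S-point spectrum: quaternions `q` for which there is a sequence of
unit vectors `φ n` with `‖R_q(A) φ n‖ → 0`. -/
def apoSpec (A : V →L[ℍᵐᵒᵖ] V) : Set ℍ :=
  {q | ∃ φ : ℕ → V, (∀ n, ‖φ n‖ = 1) ∧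
    Tendsto (fun n => ‖pseudoRes A q (φ n)‖) atTop (nhds 0)}

/-- The S-spectrum: quaternions `q` for which `R_q(A)` is not invertible in `B(V)`. -/
def sSpec (A : V →L[ℍᵐᵒᵖ] V) : Set ℍ := {q | ¬IsUnit (pseudoRes A q)}

def cq : ℂ →+* ℍ where
  toFun z := ⟨z.re, z.im, 0, 0⟩
  map_one' := by ext <;> simp <;> rfl
  map_mul' x y := by ext <;> simp [Complex.mul_re, Complex.mul_im] <;> erw [QuaternionAlgebra.mk_mul_mk] <;> simp <;> ring_nf
  map_zero' := by ext <;> simp <;> rfl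
  map_add' x y := by ext <;> simp <;> erw [QuaternionAlgebra.mk_add_mk] <;> simp

lemma cq_re (z : ℂ) : (cq z).re = z.re := rfl
lemma cq_ofReal (r : ℝ) : cq (r : ℂ) = (r : ℍ) := by ext <;> simp [cq] <;> rfl
lemma cq_comm (x y : ℂ) : Commute (cq x) (cq y) := by
  unfold Commute SemiconjBy; rw [← map_mul, ← map_mul, mul_comm]

noncomputable def cqo : ℂ →+* ℍᵐᵒᵖ := cq.toOpposite cq_comm
lemma cqo_def (z : ℂ) : cqo z = op (cq z) := rfl

lemma norm_cq (z : ℂ) : ‖cq z‖ = ‖z‖ := by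
  have h : ‖cq z‖ * ‖cq z‖ = ‖z‖ * ‖z‖ := by
    rw [← Quaternion.normSq_eq_norm_mul_self, ← pow_two, ← Complex.normSq_eq_norm_sq,
      Quaternion.normSq_def', Complex.normSq_apply]
    show z.re ^ 2 + z.im ^ 2 + 0 ^ 2 + 0 ^ 2 = _
    ring
  have := congrArg Real.sqrt h
  rwa [Real.sqrt_mul_self (norm_nonneg _), Real.sqrt_mul_self (norm_nonneg _)] at this

noncomputable def cMod : Module ℂ V := Module.compHom V cqo

noncomputable def cNS : NormedSpace ℂ V :=
  { cMod (V := V) with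
    norm_smul_le := fun z v => by
      show ‖op (cq z) • v‖ ≤ ‖z‖ * ‖v‖
      calc ‖op (cq z) • v‖ ≤ ‖op (cq z)‖ * ‖v‖ := norm_smul_le _ _
        _ = ‖z‖ * ‖v‖ := by rw [MulOpposite.norm_op, norm_cq] }
attribute [local instance] cNS

lemma csmul_def (z : ℂ) (v : V) : z • v = op (cq z) • v := rfl

lemma cSMulComm : SMulCommClass ℂ ℝ V :=
  ⟨fun z r v => by rw [csmul_def, csmul_def, smul_comm]⟩
attribute [local instance] cSMulComm

lemma real_csmul (r : ℝ) (v : V) : (r : ℂ) • v = r • v := by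
  rw [csmul_def, cq_ofReal]
  have h : (op (r : ℍ)) = (algebraMap ℝ ℍᵐᵒᵖ r) := by
    simp [MulOpposite.algebraMap_apply, Quaternion.algebraMap_def]
  rw [h, algebraMap_smul]

noncomputable def iota (B : V →L[ℍᵐᵒᵖ] V) : V →L[ℂ] V where
  toFun := B
  map_add' := B.map_add
  map_smul' := fun z v => by
    simp only [RingHom.id_apply]
    rw [csmul_def, csmul_def, B.map_smul]
  cont := B.cont

@[simp] lemma iota_apply (B : V →L[ℍᵐᵒᵖ] V) (v : V) : iota B v = B v := rfl

lemma real_csmul_clm (r : ℝ) (X : V →L[ℂ] V) : (r : ℂ) • X = r • X := by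
  ext v
  simp only [ContinuousLinearMap.smul_apply]
  exact real_csmul r (X v)

lemma iota_pseudoRes (A : V →L[ℍᵐᵒᵖ] V) (q : ℍ) :
    iota (pseudoRes A q) =
      iota A * iota A - (2 * q.re) • iota A + (‖q‖ ^ 2 : ℝ) • 1 := by
  ext v
  simp [pseudoRes, ContinuousLinearMap.mul_apply]

lemma expand_aux (T : V →L[ℂ] V) (z w : ℂ) :
    (z • 1 - T) * (w • 1 - T) = (z * w) • 1 - (z + w) • T + T * T := by
  simp only [sub_mul, mul_sub, smul_mul_assoc, mul_smul_comm, one_mul, mul_one]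
  module

lemma iota_pseudoRes_fact (A : V →L[ℍᵐᵒᵖ] V) (z : ℂ) :
    iota (pseudoRes A (cq z)) =
      (z • 1 - iota A) * ((starRingEnd ℂ) z • 1 - iota A) := by
  rw [iota_pseudoRes, expand_aux]
  have h1 : ((2 * (cq z).re : ℝ) : ℂ) • iota A = (z + (starRingEnd ℂ) z) • iota A := by
    rw [Complex.add_conj]
    norm_cast
  have h2 : ((‖cq z‖ ^ 2 : ℝ) : ℂ) • (1 : V →L[ℂ] V) = (z * (starRingEnd ℂ) z) • 1 := by
    rw [Complex.mul_conj, norm_cq, Complex.sq_norm]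
  rw [← real_csmul_clm, ← real_csmul_clm, h1, h2]
  abel

lemma isUnit_iota_iff (R : V →L[ℍᵐᵒᵖ] V) : IsUnit R ↔ IsUnit (iota R) := by
  constructor
  · rintro ⟨u, rfl⟩
    refine ⟨⟨iota u.val, iota u.inv, ?_, ?_⟩, rfl⟩
    · ext v
      show (↑u * u.inv : V →L[ℍᵐᵒᵖ] V) v = v
      rw [u.val_inv]; rfl
    · ext v
      show (u.inv * ↑u : V →L[ℍᵐᵒᵖ] V) v = v
      rw [u.inv_val]; rfl
  · rintro ⟨u, hu⟩
    have hval : ∀ v, (u : V →L[ℂ] V) v = R v := fun v => by rw [hu]; rfl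
    have h1 : ∀ v, R (((u⁻¹ :  (V →L[ℂ] V)ˣ) : V →L[ℂ] V) v) = v := fun v => by
      have := congrArg (fun X : V →L[ℂ] V => X v) u.mul_inv
      simp only [ContinuousLinearMap.mul_apply, ContinuousLinearMap.one_apply] at this
      rwa [hval] at this
    have h2 : ∀ v, ((u⁻¹ : (V →L[ℂ] V)ˣ) : V →L[ℂ] V) (R v) = v := fun v => by
      have := congrArg (fun X : V →L[ℂ] V => X v) u.inv_mul
      simp only [ContinuousLinearMap.mul_apply, ContinuousLinearMap.one_apply] at this
      rwa [hval] at this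
    set S : V →L[ℂ] V := ((u⁻¹ : (V →L[ℂ] V)ˣ) : V →L[ℂ] V) with hSdef
    have hS : ∀ (h : ℍᵐᵒᵖ) (v : V), S (h • v) = h • S v := fun h v => by
      conv_lhs => rw [show v = R (S v) from (h1 v).symm]
      rw [← R.map_smul, h2]
    let Sop : V →L[ℍᵐᵒᵖ] V :=
      { toLinearMap :=
          { toFun := S
            map_add' := fun x y => S.map_add x y
            map_smul' := fun h v => hS h v }
        cont := S.cont }
    refine ⟨⟨R, Sop, ?_, ?_⟩, rfl⟩
    · ext v
      simpa [ContinuousLinearMap.mul_apply, Sop] using h1 v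
    · ext v
      simpa [ContinuousLinearMap.mul_apply, Sop] using h2 v

theorem frontier_sSpec_subset_apoSpec [Nontrivial V] (A : V →L[ℍᵐᵒᵖ] V) :
    frontier (sSpec A) ⊆ apoSpec A ∧ (apoSpec A).Nonempty ∧ IsClosed (apoSpec A) := by
  classical
  obtain ⟨v₀, hv₀⟩ := exists_ne (0 : V)
  haveI : Nontrivial (V →L[ℂ] V) := by
    refine nontrivial_of_ne 1 0 fun h => hv₀ ?_
    have := congrArg (fun X : V →L[ℂ] V => X v₀) h
    simpa using this
  have hPcont : Continuous (fun q : ℍ => iota (pseudoRes A q)) := by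
    have heq : (fun q : ℍ => iota (pseudoRes A q)) =
        fun q : ℍ => iota A * iota A - (2 * q.re) • iota A + (‖q‖ ^ 2 : ℝ) • 1 := by
      funext q; exact iota_pseudoRes A q
    rw [heq]
    exact ((continuous_const.sub
      ((continuous_const.mul Quaternion.continuous_re).smul continuous_const))).add
      ((continuous_norm.pow 2).smul continuous_const)
  have hmemS : ∀ q : ℍ, q ∈ sSpec A ↔ ¬ IsUnit (iota (pseudoRes A q)) := fun q =>
    not_congr (isUnit_iota_iff _)
  have hclosedS : IsClosed (sSpec A) := by
    have hset : sSpec A =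
        (fun q : ℍ => iota (pseudoRes A q)) ⁻¹' ({X : V →L[ℂ] V | IsUnit X}ᶜ) :=
      Set.ext fun q => hmemS q
    rw [hset]
    exact (Units.isOpen.isClosed_compl).preimage hPcont
  have hapo : ∀ q : ℍ, (∀ ε > (0:ℝ), ∃ v : V, ‖v‖ = 1 ∧ ‖pseudoRes A q v‖ < ε) →
      q ∈ apoSpec A := by
    intro q h
    choose φ h1 h2 using fun n : ℕ => h (1 / (n + 1)) (by positivity)
    refine ⟨φ, h1, squeeze_zero (fun n => norm_nonneg _) (fun n => (h2 n).le) ?_⟩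
    exact tendsto_one_div_add_atTop_nhds_zero_nat
  have hapo' : ∀ q ∈ apoSpec A, ∀ ε > (0:ℝ), ∃ v : V, ‖v‖ = 1 ∧ ‖pseudoRes A q v‖ < ε := by
    rintro q ⟨φ, h1, h2⟩ ε hε
    obtain ⟨n, hn⟩ := (h2.eventually (gt_mem_nhds hε)).exists
    exact ⟨φ n, h1 n, hn⟩
  have hnear : ∀ (S : Set ℍ) (q : ℍ), q ∈ closure S → ∀ ε > (0:ℝ),
      ∃ p ∈ S, ‖iota (pseudoRes A p) - iota (pseudoRes A q)‖ < ε := by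
    intro S q hq ε hε
    have hU : IsOpen {p : ℍ | ‖iota (pseudoRes A p) - iota (pseudoRes A q)‖ < ε} :=
      isOpen_lt ((hPcont.sub continuous_const).norm) continuous_const
    have hqU : q ∈ {p : ℍ | ‖iota (pseudoRes A p) - iota (pseudoRes A q)‖ < ε} := by
      simpa using hε
    obtain ⟨p, hp1, hp2⟩ := _root_.mem_closure_iff.1 hq _ hU hqU
    exact ⟨p, hp2, hp1⟩
  -- frontier ⊆ apoSpec
  have hfr : frontier (sSpec A) ⊆ apoSpec A := by
    intro q hq
    have hqS : q ∈ sSpec A := by rw [← hclosedS.closure_eq]; exact hq.1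
    have hRq : ¬ IsUnit (iota (pseudoRes A q)) := (hmemS q).1 hqS
    apply hapo
    intro ε hε
    obtain ⟨p, hpS, hpq⟩ := hnear (sSpec A)ᶜ q (by rw [closure_compl]; exact hq.2)
      (ε/3) (by linarith)
    have hup : IsUnit (iota (pseudoRes A p)) := not_not.1 fun h => hpS ((hmemS p).2 h)
    obtain ⟨u, hu⟩ := hup
    set B : V →L[ℂ] V := ((u⁻¹ : (V →L[ℂ] V)ˣ) : V →L[ℂ] V) with hBdef
    have hBpos : 0 < ‖B‖ := Units.norm_pos u⁻¹
    have hinv : ‖B‖⁻¹ ≤ ‖iota (pseudoRes A q) - iota (pseudoRes A p)‖ := by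
      by_contra hcon
      push_neg at hcon
      refine hRq ?_
      have := (u.ofNearby (iota (pseudoRes A q)) (by rw [hu]; exact hcon)).isUnit
      simpa using this
    have hBex : ∃ w : V, (‖B‖ / 2) * ‖w‖ < ‖B w‖ := by
      by_contra hcon
      push_neg at hcon
      have hle : ‖B‖ ≤ ‖B‖ / 2 := ContinuousLinearMap.opNorm_le_bound B (by positivity) hcon
      linarith
    obtain ⟨w, hw⟩ := hBex
    have hwpos : 0 < ‖w‖ := by
      rcases eq_or_ne w 0 with rfl | hw0
      · simp at hw
      · exact norm_pos_iff.2 hw0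
    have hBw : 0 < ‖B w‖ := lt_of_le_of_lt (by positivity) hw
    refine ⟨(‖B w‖)⁻¹ • B w, ?_, ?_⟩
    · rw [norm_smul, norm_inv, norm_norm, inv_mul_cancel₀ hBw.ne']
    set φ : V := (‖B w‖)⁻¹ • B w with hφdef
    have hφ : ‖φ‖ = 1 := by
      rw [hφdef, norm_smul, norm_inv, norm_norm, inv_mul_cancel₀ hBw.ne']
    have hPpBw : pseudoRes A p (B w) = w := by
      have := congrArg (fun X : V →L[ℂ] V => X w) u.mul_inv
      simp only [ContinuousLinearMap.mul_apply, ContinuousLinearMap.one_apply] at this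
      rw [hu] at this
      exact this
    have hPpφ : pseudoRes A p φ = (‖B w‖)⁻¹ • w := by
      rw [hφdef, (pseudoRes A p).map_smul_of_tower, hPpBw]
    have h1 : ‖pseudoRes A q φ - pseudoRes A p φ‖ ≤
        ‖iota (pseudoRes A q) - iota (pseudoRes A p)‖ := by
      have heq2 : pseudoRes A q φ - pseudoRes A p φ =
          (iota (pseudoRes A q) - iota (pseudoRes A p)) φ := rfl
      rw [heq2]
      calc ‖(iota (pseudoRes A q) - iota (pseudoRes A p)) φ‖
          ≤ ‖iota (pseudoRes A q) - iota (pseudoRes A p)‖ * ‖φ‖ :=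
            ContinuousLinearMap.le_opNorm _ _
        _ = ‖iota (pseudoRes A q) - iota (pseudoRes A p)‖ := by rw [hφ, mul_one]
    have h2 : ‖pseudoRes A p φ‖ ≤ 2 * ‖iota (pseudoRes A q) - iota (pseudoRes A p)‖ := by
      rw [hPpφ, norm_smul, norm_inv, norm_norm]
      have e0 : (2 * ‖B‖⁻¹) * ((‖B‖/2) * ‖w‖) = ‖w‖ := by
        field_simp
      have e1 : ‖B w‖⁻¹ * ‖w‖ ≤ 2 * ‖B‖⁻¹ := by
        rw [inv_mul_eq_div, div_le_iff₀ hBw]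
        calc ‖w‖ = (2 * ‖B‖⁻¹) * ((‖B‖/2) * ‖w‖) := e0.symm
          _ ≤ (2 * ‖B‖⁻¹) * ‖B w‖ := by
              apply mul_le_mul_of_nonneg_left hw.le (by positivity)
          _ = 2 * ‖B‖⁻¹ * ‖B w‖ := rfl
      linarith [hinv]
    have h3 : ‖pseudoRes A q φ‖ ≤ 3 * ‖iota (pseudoRes A q) - iota (pseudoRes A p)‖ := by
      calc ‖pseudoRes A q φ‖
          = ‖(pseudoRes A q φ - pseudoRes A p φ) + pseudoRes A p φ‖ := by
            rw [sub_add_cancel]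
        _ ≤ ‖pseudoRes A q φ - pseudoRes A p φ‖ + ‖pseudoRes A p φ‖ := norm_add_le _ _
        _ ≤ _ + 2 * ‖iota (pseudoRes A q) - iota (pseudoRes A p)‖ := add_le_add h1 h2
        _ = 3 * ‖iota (pseudoRes A q) - iota (pseudoRes A p)‖ := by ring
    have hlt3 : ‖iota (pseudoRes A q) - iota (pseudoRes A p)‖ < ε/3 := by
      rw [norm_sub_rev]; exact hpq
    linarith
  -- sSpec nonempty
  obtain ⟨z, hz⟩ := spectrum.nonempty (iota A)
  have hzS : cq z ∈ sSpec A := by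
    intro hun
    have hun' : IsUnit (iota (pseudoRes A (cq z))) := (isUnit_iota_iff _).1 hun
    rw [iota_pseudoRes_fact] at hun'
    have hcomm : Commute (z • 1 - iota A) ((starRingEnd ℂ) z • 1 - iota A) := by
      unfold Commute SemiconjBy
      rw [expand_aux, expand_aux, mul_comm z _, add_comm z _]
    have hUzA := (hcomm.isUnit_mul_iff.1 hun').1
    exact (spectrum.mem_iff.1 hz) (by rwa [Algebra.algebraMap_eq_smul_one])
  -- a point not in sSpec
  have htpos : (0:ℝ) < ‖iota A‖ + 1 := by positivity
  have hzt : ((‖iota A‖ + 1 : ℝ) : ℂ) ∉ spectrum ℂ (iota A) := by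
    intro hmem
    have hle := spectrum.norm_le_norm_of_mem hmem
    rw [Complex.norm_real, Real.norm_eq_abs, abs_of_pos htpos] at hle
    linarith
  have hq0 : cq ((‖iota A‖ + 1 : ℝ) : ℂ) ∉ sSpec A := by
    simp only [sSpec, Set.mem_setOf_eq, not_not]
    apply (isUnit_iota_iff _).2
    rw [iota_pseudoRes_fact]
    have hU : IsUnit (((‖iota A‖ + 1 : ℝ) : ℂ) • (1 : V →L[ℂ] V) - iota A) := by
      rw [← Algebra.algebraMap_eq_smul_one]
      exact spectrum.notMem_iff.1 hzt
    rw [Complex.conj_ofReal]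
    exact hU.mul hU
  -- frontier nonempty
  haveI : PreconnectedSpace ℍ :=
    ⟨(convex_univ : Convex ℝ (Set.univ : Set ℍ)).isPreconnected⟩
  have hfne : (frontier (sSpec A)).Nonempty := by
    rw [Set.nonempty_iff_ne_empty]
    intro hemp
    have hclopen : IsClopen (sSpec A) := isClopen_iff_frontier_eq_empty.2 hemp
    rcases isClopen_iff.1 hclopen with h | h
    · rw [h] at hzS; exact Set.notMem_empty _ hzS
    · exact hq0 (h ▸ Set.mem_univ _)
  -- closedness of apoSpec
  have hclA : IsClosed (apoSpec A) := by
    refine isClosed_of_closure_subset ?_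
    intro q hq
    apply hapo
    intro ε hε
    obtain ⟨p, hp, hpq⟩ := hnear (apoSpec A) q hq (ε/2) (by linarith)
    obtain ⟨v, hv1, hv2⟩ := hapo' p hp (ε/2) (by linarith)
    refine ⟨v, hv1, ?_⟩
    have h1 : ‖pseudoRes A q v - pseudoRes A p v‖ ≤
        ‖iota (pseudoRes A p) - iota (pseudoRes A q)‖ := by
      have heq2 : pseudoRes A q v - pseudoRes A p v =
          -((iota (pseudoRes A p) - iota (pseudoRes A q)) v) := by
        show _ = -(pseudoRes A p v - pseudoRes A q v)
        rw [neg_sub]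
      rw [heq2, norm_neg]
      calc ‖(iota (pseudoRes A p) - iota (pseudoRes A q)) v‖
          ≤ ‖iota (pseudoRes A p) - iota (pseudoRes A q)‖ * ‖v‖ :=
            ContinuousLinearMap.le_opNorm _ _
        _ = ‖iota (pseudoRes A p) - iota (pseudoRes A q)‖ := by rw [hv1, mul_one]
    have h2 : ‖pseudoRes A q v‖ ≤ ‖pseudoRes A q v - pseudoRes A p v‖ +
        ‖pseudoRes A p v‖ := by
      calc ‖pseudoRes A q v‖
          = ‖(pseudoRes A q v - pseudoRes A p v) + pseudoRes A p v‖ := by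
            rw [sub_add_cancel]
        _ ≤ _ := norm_add_le _ _
    linarith
  obtain ⟨q₁, hq₁⟩ := hfne
  exact ⟨hfr, ⟨q₁, hfr hq₁⟩, hclA⟩
end

section
/- Let A be a bounded right linear operator on a right quaternionic Hilbert space V and q ∈ ℍ. Then q is not in the approximate S-point spectrum of A if and only if ran(R_q̄(A†)) = V, where A† is the adjoint of A. -/
open MulOpposite Filter

variable {V : Type*} [NormedAddCommGroup V] [NormedSpace ℝ V] [Module ℍᵐᵒᵖ V]
  [IsBoundedSMul ℍᵐᵒᵖ V] [SMulCommClass ℍᵐᵒᵖ ℝ V] [IsScalarTower ℝ ℍᵐᵒᵖ V]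
  [CompleteSpace V]

theorem not_mem_apoSpec_iff_adjoint_surjective (A B : V →L[ℍᵐᵒᵖ] V) (inn : V → V → ℍ)
    (hsymm : ∀ x y : V, inn x y = star (inn y x))
    (haddr : ∀ x y z : V, inn x (y + z) = inn x y + inn x z)
    (hsmulr : ∀ (x y : V) (p : ℍ), inn x (op p • y) = inn x y * p)
    (hnorm : ∀ x : V, inn x x = ((‖x‖ ^ 2 : ℝ) : ℍ))
    (hadj : ∀ x y : V, inn x (A y) = inn (B x) y) (q : ℍ) :
    q ∉ apoSpec A ↔ LinearMap.range (pseudoRes B (star q) : V →ₗ[ℍᵐᵒᵖ] V) = ⊤ := by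
  -- real smul in second slot
  have hsmulR : ∀ (x y : V) (r : ℝ), inn x (r • y) = inn x y * (r : ℍ) := by
    intro x y r
    have h1 : r • y = op ((r : ℍ)) • y := by
      have : op ((r : ℍ)) = r • (1 : ℍᵐᵒᵖ) := by
        rw [← MulOpposite.op_one, ← MulOpposite.op_smul]
        rw [show (1:ℍ) = ((1:ℝ):ℍ) from rfl, Quaternion.smul_coe, mul_one]
      rw [this, smul_assoc, one_smul]
    rw [h1, hsmulr]
  have hneg : ∀ x y : V, inn x (-y) = - inn x y := by
    intro x y
    have := hsmulR x y (-1)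
    simpa using this
  have hsub : ∀ x y z : V, inn x (y - z) = inn x y - inn x z := by
    intro x y z
    rw [sub_eq_add_neg, haddr, hneg, sub_eq_add_neg]
  have hre : ∀ x y : V, (inn x y).re = (inn y x).re := by
    intro x y; rw [hsymm x y]; simp
  -- real inner product structure
  letI instInner : Inner ℝ V := ⟨fun x y => (inn x y).re⟩
  letI instIPS : InnerProductSpace ℝ V :=
    { norm_sq_eq_re_inner := fun x => by
        show ‖x‖ ^ 2 = (inn x x).re
        rw [hnorm x, Quaternion.re_coe]
      conj_inner_symm := fun x y => by
        show starRingEnd ℝ (inn y x).re = (inn x y).re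
        simpa using hre y x
      add_left := fun x y z => by
        show (inn (x + y) z).re = (inn x z).re + (inn y z).re
        rw [hre, haddr]
        simp only [Quaternion.re_add]
        rw [hre z x, hre z y]
      smul_left := fun x y r => by
        show (inn (r • x) y).re = starRingEnd ℝ r * (inn x y).re
        rw [hre, hsmulR]
        simp only [Quaternion.re_mul, Quaternion.re_coe, Quaternion.imI_coe,
          Quaternion.imJ_coe, Quaternion.imK_coe, mul_zero, sub_zero, starRingEnd_apply,
          star_trivial]
        rw [hre y x]; ring }
  set T : V →L[ℝ] V := (pseudoRes A q).restrictScalars ℝ with hT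
  set S : V →L[ℝ] V := (pseudoRes B (star q)).restrictScalars ℝ with hS
  have hTapp : ∀ y, T y = A (A y) - (2 * q.re) • A y + (‖q‖ ^ 2 : ℝ) • y := by
    intro y
    show pseudoRes A q y = _
    simp [pseudoRes]
  have hSapp : ∀ x, S x = B (B x) - (2 * q.re) • B x + (‖q‖ ^ 2 : ℝ) • x := by
    intro x
    show pseudoRes B (star q) x = _
    simp [pseudoRes, Quaternion.re_star, norm_star]
  -- the key adjoint identity
  have key : ∀ x y : V, inn (S x) y = inn x (T y) := by
    intro x y
    have e1 : inn x (T y)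
        = inn x (A (A y)) - inn x (A y) * ((2 * q.re : ℝ) : ℍ)
          + inn x y * ((‖q‖ ^ 2 : ℝ) : ℍ) := by
      rw [hTapp, haddr, hsub, hsmulR, hsmulR]
    have e2 : inn (S x) y
        = inn (B (B x)) y - inn (B x) y * ((2 * q.re : ℝ) : ℍ)
          + inn x y * ((‖q‖ ^ 2 : ℝ) : ℍ) := by
      rw [hsymm, hSapp, haddr, hsub, hsmulR, hsmulR, star_add, star_sub, star_mul,
        Quaternion.star_coe, star_mul, Quaternion.star_coe, ← hsymm, ← hsymm, ← hsymm,
        Quaternion.coe_commutes, Quaternion.coe_commutes]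
    rw [e1, e2, ← hadj, ← hadj, ← hadj]
  have keyR : ∀ x y : V, (inner ℝ (S x) y : ℝ) = (inner ℝ x (T y) : ℝ) := by
    intro x y
    show (inn (S x) y).re = (inn x (T y)).re
    rw [key]
  have hnormR : ∀ x : V, (inner ℝ x x : ℝ) = ‖x‖ ^ 2 := by
    intro x
    show (inn x x).re = ‖x‖ ^ 2
    rw [hnorm, Quaternion.re_coe]
  constructor
  · intro hq
    -- T is bounded below
    obtain ⟨c, hc, hbb⟩ : ∃ c > 0, ∀ x : V, c * ‖x‖ ≤ ‖T x‖ := by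
      by_contra h
      push_neg at h
      have hx : ∀ n : ℕ, ∃ x : V, ‖T x‖ < (1 / (n + 1)) * ‖x‖ := fun n =>
        h (1 / (n + 1)) (by positivity)
      choose x hxlt using hx
      have hxne : ∀ n, ‖x n‖ ≠ 0 := by
        intro n hn
        have := hxlt n
        rw [hn, mul_zero] at this
        exact absurd this (norm_nonneg _).not_gt
      refine hq ⟨fun n => (‖x n‖)⁻¹ • x n, fun n => ?_, ?_⟩
      · rw [norm_smul, norm_inv, norm_norm, inv_mul_cancel₀ (hxne n)]
      · have hb : ∀ n : ℕ, ‖pseudoRes A q ((‖x n‖)⁻¹ • x n)‖ ≤ 1 / (n + 1) := by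
          intro n
          show ‖T ((‖x n‖)⁻¹ • x n)‖ ≤ 1 / (n + 1)
          rw [map_smul, norm_smul, norm_inv, norm_norm]
          have hpos : (0:ℝ) < ‖x n‖ := (norm_nonneg _).lt_of_ne' (hxne n)
          calc (‖x n‖)⁻¹ * ‖T (x n)‖
              ≤ (‖x n‖)⁻¹ * ((1 / (n + 1)) * ‖x n‖) :=
                mul_le_mul_of_nonneg_left (hxlt n).le (by positivity)
            _ = 1 / (n + 1) := by field_simp
        refine squeeze_zero (fun n => norm_nonneg _) hb
          tendsto_one_div_add_atTop_nhds_zero_nat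
    -- M = S ∘ T is coercive
    set M : V →L[ℝ] V := S.comp T with hM
    have hcoer : ∀ x : V, c ^ 2 * ‖x‖ ^ 2 ≤ (inner ℝ (M x) x : ℝ) := by
      intro x
      have h1 : (inner ℝ (M x) x : ℝ) = ‖T x‖ ^ 2 := by
        show (inner ℝ (S (T x)) x : ℝ) = _
        rw [keyR, hnormR]
      calc c ^ 2 * ‖x‖ ^ 2 = (c * ‖x‖) ^ 2 := by ring
        _ ≤ ‖T x‖ ^ 2 := pow_le_pow_left₀ (by positivity) (hbb x) 2
        _ = (inner ℝ (M x) x : ℝ) := h1.symm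
    have hMbb : ∀ x : V, c ^ 2 * ‖x‖ ≤ ‖M x‖ := by
      intro x
      rcases eq_or_ne x 0 with rfl | hx
      · simp
      · have hxpos : (0:ℝ) < ‖x‖ := norm_pos_iff.mpr hx
        have h2 : (inner ℝ (M x) x : ℝ) ≤ ‖M x‖ * ‖x‖ := real_inner_le_norm _ _
        have h3 : c ^ 2 * ‖x‖ * ‖x‖ ≤ ‖M x‖ * ‖x‖ := by nlinarith [(hcoer x).trans h2]
        exact le_of_mul_le_mul_right h3 hxpos
    have hanti : AntilipschitzWith (⟨(c ^ 2)⁻¹, by positivity⟩ : NNReal) M :=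
      M.antilipschitz_of_bound fun x => by
        calc ‖x‖ = (c ^ 2)⁻¹ * (c ^ 2 * ‖x‖) := by field_simp
          _ ≤ (c ^ 2)⁻¹ * ‖M x‖ := mul_le_mul_of_nonneg_left (hMbb x) (by positivity)
    have hclosed : IsClosed (Set.range M) := hanti.isClosed_range M.uniformContinuous
    have hdense : (LinearMap.range (M : V →ₗ[ℝ] V))ᗮ = ⊥ := by
      rw [Submodule.eq_bot_iff]
      intro y hy
      have h0 : (inner ℝ (M y) y : ℝ) = 0 :=
        (Submodule.mem_orthogonal _ _).mp hy (M y) (LinearMap.mem_range_self _ y)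
      have hle := hcoer y
      rw [h0] at hle
      have h5 : ‖y‖ ^ 2 ≤ 0 :=
        (mul_le_mul_iff_right₀ (pow_pos hc 2)).mp (hle.trans_eq (mul_zero _).symm)
      have h6 : ‖y‖ ^ 2 = 0 := le_antisymm h5 (sq_nonneg _)
      exact norm_eq_zero.mp (pow_eq_zero_iff two_ne_zero |>.mp h6)
    have htop : LinearMap.range (M : V →ₗ[ℝ] V) = ⊤ := by
      have h1 : (LinearMap.range (M : V →ₗ[ℝ] V)).topologicalClosure = ⊤ :=
        Submodule.topologicalClosure_eq_top_iff.mpr hdense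
      have h2 : (LinearMap.range (M : V →ₗ[ℝ] V)).topologicalClosure = LinearMap.range (M : V →ₗ[ℝ] V) := by
        apply IsClosed.submodule_topologicalClosure_eq
        simpa [LinearMap.coe_range] using hclosed
      rw [← h2, h1]
    have hMsurj : Function.Surjective M := LinearMap.range_eq_top.mp htop
    rw [LinearMap.range_eq_top]
    intro u
    obtain ⟨x, hx⟩ := hMsurj u
    exact ⟨T x, hx⟩
  · intro hsur
    have hSsurj : Function.Surjective S := by
      intro u
      obtain ⟨x, hx⟩ := (LinearMap.range_eq_top.mp hsur) u
      exact ⟨x, hx⟩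
    obtain ⟨C, hC, hpre⟩ := S.exists_preimage_norm_le hSsurj
    rintro ⟨φ, hφ1, hφ2⟩
    have hb : ∀ n, 1 ≤ C * ‖T (φ n)‖ := by
      intro n
      obtain ⟨x, hx, hxn⟩ := hpre (φ n)
      have h1 : (1 : ℝ) = (inner ℝ (S x) (φ n) : ℝ) := by
        rw [hx, hnormR, hφ1 n, one_pow]
      have h2 : (inner ℝ x (T (φ n)) : ℝ) ≤ ‖x‖ * ‖T (φ n)‖ := real_inner_le_norm x _
      have h3 : ‖x‖ * ‖T (φ n)‖ ≤ C * ‖T (φ n)‖ := by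
        apply mul_le_mul_of_nonneg_right _ (norm_nonneg _)
        simpa [hφ1 n] using hxn
      calc (1:ℝ) = (inner ℝ x (T (φ n)) : ℝ) := by rw [h1, keyR]
        _ ≤ C * ‖T (φ n)‖ := h2.trans h3
    have hlim : Tendsto (fun n => C * ‖T (φ n)‖) atTop (nhds (C * 0)) :=
      hφ2.const_mul C
    have : (1:ℝ) ≤ C * 0 := ge_of_tendsto' hlim hb
    simp at this
    linarith
end

section
/- If K is a compact right linear operator on a right quaternionic Hilbert space V, then for every nonzero quaternion q, the right eigenspace ker(qI − K) is finite dimensional. -/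
open MulOpposite Filter

variable {V : Type*} [NormedAddCommGroup V] [NormedSpace ℝ V] [Module ℍᵐᵒᵖ V]
  [IsBoundedSMul ℍᵐᵒᵖ V] [SMulCommClass ℍᵐᵒᵖ ℝ V] [IsScalarTower ℝ ℍᵐᵒᵖ V]
  [CompleteSpace V]

/-- If `K` is a compact right linear operator and `q ≠ 0`, then the right eigenspace
`ker (qI − K)` is finite dimensional.  Here `Lq` is the operator of left scalar
multiplication by `q` (induced by a fixed Hilbert basis), which is a bounded right linear
operator satisfying `‖q φ‖ = |q| ‖φ‖`. -/
theorem eigenspace_finiteDimensional_of_compact (K Lq : V →L[ℍᵐᵒᵖ] V) (q : ℍ) (hq : q ≠ 0)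
    (hK : IsCompactOperator K) (hLq : ∀ φ : V, ‖Lq φ‖ = ‖q‖ * ‖φ‖) :
    FiniteDimensional ℍᵐᵒᵖ (LinearMap.ker ((Lq - K : V →L[ℍᵐᵒᵖ] V) : V →ₗ[ℍᵐᵒᵖ] V)) := by
  set p : Submodule ℍᵐᵒᵖ V := LinearMap.ker ((Lq - K : V →L[ℍᵐᵒᵖ] V) : V →ₗ[ℍᵐᵒᵖ] V) with hp
  have hpc : IsClosed (p : Set V) := ContinuousLinearMap.isClosed_ker (Lq - K)
  set D : Set V := (p : Set V) ∩ Metric.closedBall 0 1 with hD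
  have hDb : Bornology.IsBounded D :=
    (Metric.isBounded_closedBall).subset Set.inter_subset_right
  have hKD : IsCompact (closure (K '' D)) := by
    have : IsCompactOperator (K.restrictScalars ℝ : V →L[ℝ] V) := hK
    exact this.isCompact_closure_image_of_bounded hDb
  have heq : Lq '' D = K '' D := by
    apply Set.image_congr
    intro x hx
    have hx0 : (Lq - K) x = 0 := hx.1
    have := sub_eq_zero.mp (by simpa using hx0)
    exact this
  have anti : AntilipschitzWith ‖q‖₊⁻¹ Lq := by
    apply AntilipschitzWith.of_le_mul_dist
    intro x y
    have h : dist (Lq x) (Lq y) = ‖q‖ * dist x y := by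
      rw [dist_eq_norm, dist_eq_norm, ← map_sub, hLq]
    rw [h, NNReal.coe_inv, coe_nnnorm, ← mul_assoc,
      inv_mul_cancel₀ (norm_ne_zero_iff.mpr hq), one_mul]
  have hui : IsUniformInducing Lq := anti.isUniformInducing Lq.uniformContinuous
  have htb : TotallyBounded D := by
    have : TotallyBounded (Lq ⁻¹' closure (K '' D)) :=
      totallyBounded_preimage hui hKD.totallyBounded
    refine this.subset fun x hx => ?_
    exact subset_closure (heq ▸ Set.mem_image_of_mem Lq hx)
  have hDclosed : IsClosed D := hpc.inter Metric.isClosed_closedBall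
  have hDcompact : IsCompact D :=
    isCompact_iff_totallyBounded_isComplete.mpr ⟨htb, hDclosed.isComplete⟩
  have hball : IsCompact (Metric.closedBall (0 : p) 1) := by
    rw [Subtype.isCompact_iff]
    convert hDcompact
    ext x
    simp only [Set.mem_image, Metric.mem_closedBall, dist_zero_right, hD]
    constructor
    · rintro ⟨y, hy, rfl⟩
      exact ⟨y.2, by simpa using hy⟩
    · rintro ⟨hx1, hx2⟩
      exact ⟨⟨x, hx1⟩, by simpa using hx2, rfl⟩
  haveI : FiniteDimensional ℝ p := .of_isCompact_closedBall₀ ℝ one_pos hball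
  exact Module.Finite.of_restrictScalars_finite ℝ ℍᵐᵒᵖ p
end
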